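/- arXiv:2308.02732 — 4 statements merged into one kernel-verified Lean document; each statement's English description precedes it below -/
import Mathlib

section
/- In the color basis the coproduct is diagonal: for all 0 ≤ i ≤ n−1, Δ̂(c_i) = n · λ^{−2mi} · (c_i ⊗ c_i) in A ⊗ A. -/
open Polynomial

/-- `A n = ℂ[x]/(x^n - 1)`. -/
abbrev ColorAlgebra (n : ℕ) : Type := AdjoinRoot (X ^ n - 1 : Polynomial ℂ)

/-- `λ = exp(2πi/n)`. -/
noncomputable def colorLambda (n : ℕ) : ℂ :=
  Complex.exp (2 * Real.pi * Complex.I / n)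

/-- The color basis element `c_i = (1/n) ∑_{k=0}^{n-1} λ^{k i} x^k`. -/
noncomputable def colorBasisElem (n : ℕ) (i : Fin n) : ColorAlgebra n :=
  (n : ℂ)⁻¹ • ∑ k ∈ Finset.range n,
    (colorLambda n) ^ (k * (i : ℕ)) • (AdjoinRoot.root (X ^ n - 1 : Polynomial ℂ)) ^ k


/-- `m = n/2` if `n` is even and `m = (n-1)/2` if `n` is odd. -/
def halfShift (n : ℕ) : ℕ := if Even n then n / 2 else (n - 1) / 2

lemma colorLambda_ne_zero (n : ℕ) : colorLambda n ≠ 0 := Complex.exp_ne_zero _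

lemma colorLambda_pow_n (n : ℕ) (hn : 0 < n) : colorLambda n ^ n = 1 := by
  rw [colorLambda, ← Complex.exp_nat_mul, mul_div_cancel₀]
  · exact Complex.exp_two_pi_mul_I
  · exact_mod_cast hn.ne'

lemma colorLambda_zpow_congr (n : ℕ) (hn : 0 < n) {a b : ℤ} (h : a ≡ b [ZMOD n]) :
    colorLambda n ^ a = colorLambda n ^ b := by
  obtain ⟨t, ht⟩ := Int.ModEq.dvd h
  have : b = a + n * t := by linarith
  rw [this, zpow_add₀ (colorLambda_ne_zero n), zpow_mul, zpow_natCast,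
    colorLambda_pow_n n hn, one_zpow, mul_one]

/-- The unique index `k` with `k ≡ a + b - 2m (mod n)`. -/
def kIdx (n m : ℕ) (hn : 0 < n) (a b : Fin n) : Fin n :=
  ⟨((a : ℕ) + (b : ℕ) + 2 * m * (n - 1)) % n, Nat.mod_lt _ hn⟩

lemma fin_cast_inj {n : ℕ} [NeZero n] {k l : Fin n}
    (h : ((k : ℕ) : ZMod n) = ((l : ℕ) : ZMod n)) : k = l := by
  have := congrArg ZMod.val h
  rw [ZMod.val_cast_of_lt k.isLt, ZMod.val_cast_of_lt l.isLt] at this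
  exact Fin.ext this

lemma kIdx_cast {n m : ℕ} (hn : 1 < n) (a b : Fin n) :
    ((kIdx n m (by omega) a b : ℕ) : ZMod n)
      = ((a : ℕ) : ZMod n) + (b : ℕ) - 2 * m := by
  have hn' : (1 : ℕ) ≤ n := by omega
  rw [kIdx]
  simp only [ZMod.natCast_mod]
  push_cast [Nat.cast_sub hn']
  rw [ZMod.natCast_self]
  ring

lemma cond_iff {n m : ℕ} (hn : 1 < n) (a b k : Fin n) :
    ((a : ℕ) + (b : ℕ)) % n = ((k : ℕ) + 2 * m) % n ↔ k = kIdx n m (by omega) a b := by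
  haveI : NeZero n := ⟨by omega⟩
  have h1 : ((a : ℕ) + (b : ℕ)) % n = ((k : ℕ) + 2 * m) % n ↔
      (((a : ℕ) + (b : ℕ) : ℕ) : ZMod n) = (((k : ℕ) + 2 * m : ℕ) : ZMod n) := by
    rw [ZMod.natCast_eq_natCast_iff]
    exact Iff.rfl
  rw [h1]
  push_cast
  constructor
  · intro h
    refine fin_cast_inj ?_
    rw [kIdx_cast hn]
    linear_combination -h
  · intro h
    have := congrArg (fun x : Fin n => ((x : ℕ) : ZMod n)) h
    change ((k : ℕ) : ZMod n) = ((kIdx n m (by omega) a b : ℕ) : ZMod n) at this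
    rw [kIdx_cast hn] at this
    linear_combination -this

/-- In the color basis the coproduct is diagonal:
`Δ̂(c_i) = n · λ^{-2mi} · (c_i ⊗ c_i)`. -/
theorem coproduct_diagonal_on_colorBasis (n : ℕ) (hn : 1 < n)
    (Δ : ColorAlgebra n →ₗ[ℂ] TensorProduct ℂ (ColorAlgebra n) (ColorAlgebra n))
    (hΔ : ∀ k : Fin n,
      Δ ((AdjoinRoot.root (X ^ n - 1 : Polynomial ℂ)) ^ (k : ℕ)) =
        ∑ p ∈ Finset.univ.filter
            (fun p : Fin n × Fin n =>
              ((p.1 : ℕ) + (p.2 : ℕ)) % n = ((k : ℕ) + 2 * halfShift n) % n),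
          ((AdjoinRoot.root (X ^ n - 1 : Polynomial ℂ)) ^ (p.1 : ℕ)) ⊗ₜ[ℂ]
            ((AdjoinRoot.root (X ^ n - 1 : Polynomial ℂ)) ^ (p.2 : ℕ))) :
    ∀ i : Fin n,
      Δ (colorBasisElem n i) =
        (n : ℂ) • (colorLambda n ^ (-((2 * halfShift n * (i : ℕ) : ℕ) : ℤ))) •
          (colorBasisElem n i ⊗ₜ[ℂ] colorBasisElem n i) := by
  intro i
  haveI : NeZero n := ⟨by omega⟩
  have hn0 : 0 < n := by omega
  set m := halfShift n with hm
  set ζ := colorLambda n with hζ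
  set r := AdjoinRoot.root (X ^ n - 1 : Polynomial ℂ) with hr
  -- LHS
  rw [colorBasisElem, map_smul, ← Fin.sum_univ_eq_sum_range, map_sum]
  simp only [map_smul, ← hr, hΔ]
  simp only [Finset.smul_sum, Finset.sum_filter]
  rw [Finset.sum_comm]
  simp only [smul_ite, smul_zero]
  simp only [← Finset.sum_filter]
  have hfil : ∀ p : Fin n × Fin n,
      Finset.univ.filter
        (fun k : Fin n => ((p.1 : ℕ) + (p.2 : ℕ)) % n = ((k : ℕ) + 2 * m) % n)
        = {kIdx n m hn0 p.1 p.2} := by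
    intro p
    ext k
    simp only [Finset.mem_filter, Finset.mem_univ, true_and, Finset.mem_singleton]
    exact cond_iff hn p.1 p.2 k
  simp only [hfil, Finset.sum_singleton]
  -- RHS
  simp only [TensorProduct.sum_tmul, TensorProduct.tmul_sum, ← TensorProduct.smul_tmul',
    TensorProduct.tmul_smul, Finset.smul_sum, smul_smul]
  rw [Fintype.sum_prod_type_right]
  apply Finset.sum_congr rfl
  intro b _
  apply Finset.sum_congr rfl
  intro a _
  dsimp only
  congr 1
  -- scalar identity
  have hnc : (n : ℂ) ≠ 0 := by exact_mod_cast hn0.ne'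
  have hkey : ζ ^ ((kIdx n m hn0 a b : ℕ) * (i : ℕ))
      = ζ ^ (-((2 * m * (i : ℕ) : ℕ) : ℤ)) * (ζ ^ ((a : ℕ) * (i : ℕ)) * ζ ^ ((b : ℕ) * (i : ℕ))) := by
    rw [← zpow_natCast ζ ((kIdx n m hn0 a b : ℕ) * (i : ℕ)),
      ← zpow_natCast ζ ((a : ℕ) * (i : ℕ)), ← zpow_natCast ζ ((b : ℕ) * (i : ℕ)),
      ← zpow_add₀ (colorLambda_ne_zero n), ← zpow_add₀ (colorLambda_ne_zero n)]
    apply colorLambda_zpow_congr n hn0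
    rw [Int.ModEq]
    have : (((kIdx n m hn0 a b : ℕ) * (i : ℕ) : ℤ) : ZMod n)
        = ((-((2 * m * (i : ℕ) : ℕ) : ℤ) + ((a : ℕ) * (i : ℕ) + (b : ℕ) * (i : ℕ)) : ℤ) : ZMod n) := by
      push_cast
      rw [kIdx_cast hn]
      ring
    exact (ZMod.intCast_eq_intCast_iff _ _ _).mp this
  rw [hkey]
  have h1 : (n : ℂ) * (n : ℂ)⁻¹ = 1 := mul_inv_cancel₀ hnc
  linear_combination (-(ζ ^ (-((2 * m * (i : ℕ) : ℕ) : ℤ)) * ζ ^ ((a : ℕ) * (i : ℕ)) *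
    ζ ^ ((b : ℕ) * (i : ℕ)) * ((n : ℂ))⁻¹)) * h1
end

section
/- The Frobenius relation holds for (A, m̂, Δ̂): as linear maps A ⊗ A → A ⊗ A one has Δ̂ ∘ m̂ = (id_A ⊗ m̂) ∘ (Δ̂ ⊗ id_A) = (m̂ ⊗ id_A) ∘ (id_A ⊗ Δ̂). -/
open Polynomial

noncomputable def cRoot (n : ℕ) : ColorAlgebra n := AdjoinRoot.root (X ^ n - 1 : Polynomial ℂ)

lemma cRoot_pow_n (n : ℕ) : cRoot n ^ n = 1 := by
  have h : AdjoinRoot.mk (X ^ n - 1 : Polynomial ℂ) (X ^ n - 1) = 0 := AdjoinRoot.mk_self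
  rw [map_sub, map_pow, AdjoinRoot.mk_X, map_one, sub_eq_zero] at h
  exact h

lemma cRoot_pow_mod (n : ℕ) (hn : 0 < n) (k : ℕ) : cRoot n ^ k = cRoot n ^ (k % n) := by
  conv_lhs => rw [← Nat.div_add_mod k n]
  rw [pow_add, pow_mul, cRoot_pow_n, one_pow, one_mul]

noncomputable def cSet (n : ℕ) (c : ℕ) : Finset (Fin n × Fin n) :=
  Finset.univ.filter (fun p : Fin n × Fin n => ((p.1 : ℕ) + (p.2 : ℕ)) % n = c % n)

lemma sum_shift_right (n : ℕ) (hn : 0 < n) (c : ℕ) (j : Fin n) :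
    ∑ p ∈ cSet n (c + (j : ℕ)), (cRoot n ^ (p.1 : ℕ)) ⊗ₜ[ℂ] (cRoot n ^ (p.2 : ℕ)) =
      ∑ p ∈ cSet n c, (cRoot n ^ (p.1 : ℕ)) ⊗ₜ[ℂ] (cRoot n ^ ((p.2 : ℕ) + (j : ℕ))) := by
  haveI : NeZero n := ⟨hn.ne'⟩
  refine (Finset.sum_equiv (Equiv.prodCongr (Equiv.refl _) (Equiv.addRight j)) ?_ ?_).symm
  · intro p
    simp only [cSet, Finset.mem_filter, Finset.mem_univ, true_and, Equiv.prodCongr_apply,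
      Equiv.coe_refl, Prod.map_fst, Prod.map_snd, Prod.map_apply, id_eq, Equiv.coe_addRight, Fin.val_add,
      Nat.add_mod_mod, ← add_assoc]
    constructor
    · exact fun h => Nat.ModEq.add_right (j : ℕ) h
    · exact fun h => Nat.ModEq.add_right_cancel' (j : ℕ) h
  · intro p _
    simp only [Equiv.prodCongr_apply, Equiv.coe_refl, Prod.map_fst, Prod.map_snd, Prod.map_apply, id_eq,
      Equiv.coe_addRight, Fin.val_add]
    rw [← cRoot_pow_mod n hn]

lemma sum_shift_left (n : ℕ) (hn : 0 < n) (c : ℕ) (j : Fin n) :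
    ∑ p ∈ cSet n (c + (j : ℕ)), (cRoot n ^ (p.1 : ℕ)) ⊗ₜ[ℂ] (cRoot n ^ (p.2 : ℕ)) =
      ∑ p ∈ cSet n c, (cRoot n ^ ((j : ℕ) + (p.1 : ℕ))) ⊗ₜ[ℂ] (cRoot n ^ (p.2 : ℕ)) := by
  haveI : NeZero n := ⟨hn.ne'⟩
  refine (Finset.sum_equiv (Equiv.prodCongr (Equiv.addRight j) (Equiv.refl _)) ?_ ?_).symm
  · intro p
    simp only [cSet, Finset.mem_filter, Finset.mem_univ, true_and, Equiv.prodCongr_apply,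
      Equiv.coe_refl, Prod.map_fst, Prod.map_snd, Prod.map_apply, id_eq, Equiv.coe_addRight, Fin.val_add,
      Nat.mod_add_mod]
    constructor
    · intro h
      have : ((p.1 : ℕ) + (p.2 : ℕ)) + (j : ℕ) ≡ c + (j : ℕ) [MOD n] := Nat.ModEq.add_right _ h
      calc ((p.1 : ℕ) + (j : ℕ) + (p.2 : ℕ)) % n = ((p.1 : ℕ) + (p.2 : ℕ) + (j : ℕ)) % n := by
            ring_nf
        _ = (c + (j : ℕ)) % n := this
    · intro h
      have h' : ((p.1 : ℕ) + (p.2 : ℕ)) + (j : ℕ) ≡ c + (j : ℕ) [MOD n] := by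
        calc ((p.1 : ℕ) + (p.2 : ℕ) + (j : ℕ)) % n = ((p.1 : ℕ) + (j : ℕ) + (p.2 : ℕ)) % n := by
              ring_nf
          _ = (c + (j : ℕ)) % n := h
      exact Nat.ModEq.add_right_cancel' (j : ℕ) h'
  · intro p _
    simp only [Equiv.prodCongr_apply, Equiv.coe_refl, Prod.map_fst, Prod.map_snd, Prod.map_apply, id_eq,
      Equiv.coe_addRight, Fin.val_add]
    rw [← cRoot_pow_mod n hn, add_comm ((p.1:ℕ)) ((j:ℕ))]

lemma natDegree_cpoly (n : ℕ) (hn : 0 < n) : (X ^ n - 1 : Polynomial ℂ).natDegree = n := by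
  have : (X ^ n - 1 : Polynomial ℂ) = X ^ n - C (1 : ℂ) := by simp
  rw [this, natDegree_X_pow_sub_C]

lemma monic_cpoly (n : ℕ) (hn : 0 < n) : (X ^ n - 1 : Polynomial ℂ).Monic := by
  have : (X ^ n - 1 : Polynomial ℂ) = X ^ n + C (-1 : ℂ) := by
    simp [sub_eq_add_neg]
  rw [this]
  exact monic_X_pow_add_C _ hn.ne'

set_option maxHeartbeats 1000000 in
set_option synthInstance.maxHeartbeats 400000 in
/-- The Frobenius relation for `(A, m̂, Δ̂)`:
`Δ̂ ∘ m̂ = (id ⊗ m̂) ∘ (Δ̂ ⊗ id) = (m̂ ⊗ id) ∘ (id ⊗ Δ̂)`. -/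
theorem frobenius_relation (n : ℕ) (hn : 1 < n)
    (Δ : ColorAlgebra n →ₗ[ℂ] TensorProduct ℂ (ColorAlgebra n) (ColorAlgebra n))
    (hΔ : ∀ k : Fin n,
      Δ ((AdjoinRoot.root (X ^ n - 1 : Polynomial ℂ)) ^ (k : ℕ)) =
        ∑ p ∈ Finset.univ.filter
            (fun p : Fin n × Fin n =>
              ((p.1 : ℕ) + (p.2 : ℕ)) % n = ((k : ℕ) + 2 * halfShift n) % n),
          ((AdjoinRoot.root (X ^ n - 1 : Polynomial ℂ)) ^ (p.1 : ℕ)) ⊗ₜ[ℂ]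
            ((AdjoinRoot.root (X ^ n - 1 : Polynomial ℂ)) ^ (p.2 : ℕ))) :
    Δ.comp (LinearMap.mul' ℂ (ColorAlgebra n)) =
        (TensorProduct.map LinearMap.id (LinearMap.mul' ℂ (ColorAlgebra n))).comp
          ((TensorProduct.assoc ℂ (ColorAlgebra n) (ColorAlgebra n)
              (ColorAlgebra n)).toLinearMap.comp
            (TensorProduct.map Δ LinearMap.id)) ∧
      Δ.comp (LinearMap.mul' ℂ (ColorAlgebra n)) =
        (TensorProduct.map (LinearMap.mul' ℂ (ColorAlgebra n)) LinearMap.id).comp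
          (((TensorProduct.assoc ℂ (ColorAlgebra n) (ColorAlgebra n)
              (ColorAlgebra n)).symm.toLinearMap).comp
            (TensorProduct.map LinearMap.id Δ)) := by
  have npos : 0 < n := hn.le.trans_lt' (by norm_num) |>.trans_le le_rfl
  haveI : NeZero n := ⟨npos.ne'⟩
  set r := cRoot n with hr
  set M := halfShift n with hM
  -- rewrite hΔ in terms of cSet
  have hΔ' : ∀ a : ℕ, a < n → Δ (r ^ a) =
      ∑ p ∈ cSet n (a + 2 * M), (r ^ (p.1 : ℕ)) ⊗ₜ[ℂ] (r ^ (p.2 : ℕ)) := by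
    intro a ha
    exact hΔ ⟨a, ha⟩
  -- general value of Δ
  have hΔmod : ∀ a : ℕ, Δ (r ^ a) =
      ∑ p ∈ cSet n (a + 2 * M), (r ^ (p.1 : ℕ)) ⊗ₜ[ℂ] (r ^ (p.2 : ℕ)) := by
    intro a
    rw [cRoot_pow_mod n npos, hΔ' (a % n) (Nat.mod_lt _ npos)]
    congr 1
    unfold cSet
    ext p
    simp only [Finset.mem_filter, Finset.mem_univ, true_and]
    rw [Nat.mod_add_mod]
  -- basis
  have hmon := monic_cpoly n npos
  set pb := AdjoinRoot.powerBasis (f := (X ^ n - 1 : Polynomial ℂ)) hmon.ne_zero with hpb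
  have hgen : pb.gen = AdjoinRoot.root _ := AdjoinRoot.powerBasis_gen hmon.ne_zero
  have hb : ∀ k : Fin pb.dim, pb.basis k = r ^ (k : ℕ) := by
    intro k; rw [pb.basis_eq_pow, hgen]; rfl
  have hd : pb.dim = n := by
    rw [hpb, AdjoinRoot.powerBasis_dim, natDegree_cpoly n npos]
  have hlt : ∀ k : Fin pb.dim, (k : ℕ) < n := fun k => k.2.trans_le hd.le
  constructor
  · apply TensorProduct.ext
    apply pb.basis.ext
    intro i
    apply pb.basis.ext
    intro j
    simp only [LinearMap.compr₂_apply, LinearMap.compr₂ₛₗ_apply, TensorProduct.mk_apply, hb, LinearMap.coe_comp,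
      Function.comp_apply, LinearEquiv.coe_coe, TensorProduct.map_tmul, LinearMap.id_coe,
      id_eq, LinearMap.mul'_apply]
    rw [← pow_add, hΔmod, hΔmod (i : ℕ), TensorProduct.sum_tmul, map_sum, map_sum]
    simp only [TensorProduct.assoc_tmul, TensorProduct.map_tmul, LinearMap.id_coe, id_eq,
      LinearMap.mul'_apply, ← pow_add]
    have key := sum_shift_right n npos ((i : ℕ) + 2 * M) ⟨(j : ℕ), hlt j⟩
    rw [show (i : ℕ) + (j : ℕ) + 2 * M = (i : ℕ) + 2 * M + (j : ℕ) by ring]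
    exact key
  · apply TensorProduct.ext
    apply pb.basis.ext
    intro i
    apply pb.basis.ext
    intro j
    simp only [LinearMap.compr₂_apply, LinearMap.compr₂ₛₗ_apply, TensorProduct.mk_apply, hb, LinearMap.coe_comp,
      Function.comp_apply, LinearEquiv.coe_coe, TensorProduct.map_tmul, LinearMap.id_coe,
      id_eq, LinearMap.mul'_apply]
    rw [← pow_add, hΔmod, hΔmod (j : ℕ), TensorProduct.tmul_sum, map_sum, map_sum]
    simp only [TensorProduct.assoc_symm_tmul, TensorProduct.map_tmul, LinearMap.id_coe, id_eq,
      LinearMap.mul'_apply, ← pow_add]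
    have key := sum_shift_left n npos ((j : ℕ) + 2 * M) ⟨(i : ℕ), hlt i⟩
    rw [show (i : ℕ) + (j : ℕ) + 2 * M = (j : ℕ) + 2 * M + (i : ℕ) by ring]
    exact key
end

section
/- The coproduct Δ̂ is coassociative: as linear maps A → A ⊗ A ⊗ A one has (Δ̂ ⊗ id_A) ∘ Δ̂ = (id_A ⊗ Δ̂) ∘ Δ̂. -/
open Polynomial

private def zToFin (n : ℕ) [NeZero n] (a : ZMod n) : Fin n := ⟨a.val, ZMod.val_lt a⟩

private lemma zToFin_cast (n : ℕ) [NeZero n] (a : ZMod n) :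
    ((zToFin n a : ℕ) : ZMod n) = a := ZMod.natCast_rightInverse a

private lemma zToFin_natCast (n : ℕ) [NeZero n] (a : Fin n) :
    zToFin n ((a : ℕ) : ZMod n) = a := by
  apply Fin.ext
  simp [zToFin, ZMod.val_natCast_of_lt a.isLt]

private lemma key_sum {M : Type*} [AddCommMonoid M] (n : ℕ) [NeZero n] (m k : ℕ)
    (g : Fin n → Fin n → Fin n → M) :
    ∑ p ∈ Finset.univ.filter (fun p : Fin n × Fin n => ((p.1:ℕ)+(p.2:ℕ)) % n = (k + m) % n),
      ∑ q ∈ Finset.univ.filter (fun q : Fin n × Fin n => ((q.1:ℕ)+(q.2:ℕ)) % n = ((p.1:ℕ) + m) % n),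
        g q.1 q.2 p.2
    = ∑ p ∈ Finset.univ.filter (fun p : Fin n × Fin n => ((p.1:ℕ)+(p.2:ℕ)) % n = (k + m) % n),
      ∑ q ∈ Finset.univ.filter (fun q : Fin n × Fin n => ((q.1:ℕ)+(q.2:ℕ)) % n = ((p.2:ℕ) + m) % n),
        g p.1 q.1 q.2 := by
  have hmod : ∀ a b : ℕ, (a % n = b % n) ↔ ((a : ZMod n) = (b : ZMod n)) :=
    fun a b => (ZMod.natCast_eq_natCast_iff a b n).symm
  rw [Finset.sum_sigma', Finset.sum_sigma']
  refine Finset.sum_bij'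
    (fun z _ => ⟨(z.2.1, zToFin n (((z.2.2:ℕ):ZMod n) + ((z.1.2:ℕ):ZMod n) - (m:ZMod n))), (z.2.2, z.1.2)⟩)
    (fun z _ => ⟨(zToFin n (((z.1.1:ℕ):ZMod n) + ((z.2.1:ℕ):ZMod n) - (m:ZMod n)), z.2.2), (z.1.1, z.2.1)⟩)
    ?_ ?_ ?_ ?_ ?_
  · rintro ⟨⟨p1, p2⟩, ⟨q1, q2⟩⟩ hz
    simp only [Finset.mem_sigma, Finset.mem_filter, Finset.mem_univ, true_and, hmod,
      Nat.cast_add, zToFin_cast] at hz ⊢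
    obtain ⟨h1, h2⟩ := hz
    exact ⟨by linear_combination h1 + h2, by ring⟩
  · rintro ⟨⟨p1, p2⟩, ⟨q1, q2⟩⟩ hz
    simp only [Finset.mem_sigma, Finset.mem_filter, Finset.mem_univ, true_and, hmod,
      Nat.cast_add, zToFin_cast] at hz ⊢
    obtain ⟨h1, h2⟩ := hz
    exact ⟨by linear_combination h1 + h2, by ring⟩
  · rintro ⟨⟨p1, p2⟩, ⟨q1, q2⟩⟩ hz
    simp only [Finset.mem_sigma, Finset.mem_filter, Finset.mem_univ, true_and, hmod,
      Nat.cast_add] at hz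
    obtain ⟨h1, h2⟩ := hz
    have hv : ((q1:ℕ):ZMod n) + ((q2:ℕ):ZMod n) - (m:ZMod n) = ((p1:ℕ):ZMod n) := by
      linear_combination h2
    simp only [hv, zToFin_natCast]
  · rintro ⟨⟨p1, p2⟩, ⟨q1, q2⟩⟩ hz
    simp only [Finset.mem_sigma, Finset.mem_filter, Finset.mem_univ, true_and, hmod,
      Nat.cast_add] at hz
    obtain ⟨h1, h2⟩ := hz
    have hv : ((q1:ℕ):ZMod n) + ((q2:ℕ):ZMod n) - (m:ZMod n) = ((p2:ℕ):ZMod n) := by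
      linear_combination h2
    simp only [hv, zToFin_natCast]
  · rintro ⟨⟨p1, p2⟩, ⟨q1, q2⟩⟩ hz
    rfl


/-- The coproduct `Δ̂` is coassociative: `(Δ̂ ⊗ id) ∘ Δ̂ = (id ⊗ Δ̂) ∘ Δ̂`. -/
theorem coproduct_coassociative (n : ℕ) (hn : 1 < n)
    (Δ : ColorAlgebra n →ₗ[ℂ] TensorProduct ℂ (ColorAlgebra n) (ColorAlgebra n))
    (hΔ : ∀ k : Fin n,
      Δ ((AdjoinRoot.root (X ^ n - 1 : Polynomial ℂ)) ^ (k : ℕ)) =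
        ∑ p ∈ Finset.univ.filter
            (fun p : Fin n × Fin n =>
              ((p.1 : ℕ) + (p.2 : ℕ)) % n = ((k : ℕ) + 2 * halfShift n) % n),
          ((AdjoinRoot.root (X ^ n - 1 : Polynomial ℂ)) ^ (p.1 : ℕ)) ⊗ₜ[ℂ]
            ((AdjoinRoot.root (X ^ n - 1 : Polynomial ℂ)) ^ (p.2 : ℕ))) :
    ((TensorProduct.assoc ℂ (ColorAlgebra n) (ColorAlgebra n)
          (ColorAlgebra n)).toLinearMap.comp
        ((TensorProduct.map Δ LinearMap.id).comp Δ)) =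
      (TensorProduct.map LinearMap.id Δ).comp Δ := by
  have hn0 : n ≠ 0 := by omega
  haveI : NeZero n := ⟨hn0⟩
  have hmonic : (X ^ n - 1 : Polynomial ℂ).Monic := by
    simpa using Polynomial.monic_X_pow_sub_C (1 : ℂ) hn0
  set pb := AdjoinRoot.powerBasis' hmonic with hpb
  apply pb.basis.ext
  intro i
  have hdim : pb.dim = n := by
    show (X ^ n - 1 : Polynomial ℂ).natDegree = n
    simpa using Polynomial.natDegree_X_pow_sub_C (R := ℂ) (n := n) (r := 1)
  obtain ⟨k, hbi⟩ : ∃ k : Fin n,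
      pb.basis i = (AdjoinRoot.root (X ^ n - 1 : Polynomial ℂ)) ^ (k : ℕ) :=
    ⟨⟨(i : ℕ), lt_of_lt_of_le i.isLt hdim.le⟩, by rw [pb.basis_eq_pow i]; rfl⟩
  rw [hbi]
  simp only [LinearMap.comp_apply, hΔ, map_sum, TensorProduct.map_tmul, LinearMap.id_coe,
    id_eq, TensorProduct.sum_tmul, TensorProduct.tmul_sum, LinearEquiv.coe_coe,
    TensorProduct.assoc_tmul]
  exact key_sum n (2 * halfShift n) (k : ℕ)
    (fun a b c => ((AdjoinRoot.root (X ^ n - 1 : Polynomial ℂ)) ^ (a : ℕ)) ⊗ₜ[ℂ]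
      (((AdjoinRoot.root (X ^ n - 1 : Polynomial ℂ)) ^ (b : ℕ)) ⊗ₜ[ℂ]
        ((AdjoinRoot.root (X ^ n - 1 : Polynomial ℂ)) ^ (c : ℕ))))
end

section
/- For every cubic graph G with perfect matching M, the number of perfect matching 3-colorings of (G, M) equals the number of proper 3-edge colorings of G, where a proper 3-edge coloring is a function from the edge set of G to a 3-element color set assigning distinct colors to any two distinct edges sharing a vertex. -/
/-- `M` is a perfect matching of `G`, viewed as a set of edges: `M ⊆ E(G)` and every
vertex is incident to exactly one edge of `M`. -/
def IsPerfectMatchingSet {V : Type*} (G : SimpleGraph V) (M : Set (Sym2 V)) : Prop :=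
  M ⊆ G.edgeSet ∧ ∀ v : V, ∃! e : Sym2 V, e ∈ M ∧ v ∈ e

/-- The non-matching edges of `(G, M)`: the edges of `G` not belonging to `M`. -/
def NonMatchingEdge {V : Type*} (G : SimpleGraph V) (M : Set (Sym2 V)) : Type _ :=
  {e : Sym2 V // e ∈ G.edgeSet ∧ e ∉ M}

/-- `f` is a perfect matching `n`-coloring of `(G, M)`: for every matching edge
`{u, v} ∈ M`, the edges of `E(G) ∖ M` incident to `u` receive distinct colors, and the
set of colors appearing on edges of `E(G) ∖ M` incident to `u` equals the set of colors
appearing on edges of `E(G) ∖ M` incident to `v`. -/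
def IsPMColoring {V : Type*} (G : SimpleGraph V) (M : Set (Sym2 V)) {n : ℕ}
    (f : NonMatchingEdge G M → Fin n) : Prop :=
  ∀ u v : V, s(u, v) ∈ M →
    (∀ e₁ e₂ : NonMatchingEdge G M, u ∈ e₁.1 → u ∈ e₂.1 → e₁ ≠ e₂ → f e₁ ≠ f e₂) ∧
    {c : Fin n | ∃ e : NonMatchingEdge G M, u ∈ e.1 ∧ f e = c} =
      {c : Fin n | ∃ e : NonMatchingEdge G M, v ∈ e.1 ∧ f e = c}

open Classical Finset

section Aux

lemma fin3_L1 : ∀ a b : Fin 3, a ≠ b → -(a + b) ≠ a ∧ -(a + b) ≠ b := by decide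

lemma fin3_L2 : ∀ a b c : Fin 3, a ≠ b → c ≠ a → c ≠ b → c = -(a + b) := by decide

lemma fin3_L3 : ∀ a b m c : Fin 3, a ≠ b → m ≠ a → m ≠ b → c ≠ m → c = a ∨ c = b := by
  decide

variable {V : Type*} [Fintype V] (G : SimpleGraph V) (M : Set (Sym2 V))

noncomputable instance : Fintype (NonMatchingEdge G M) := by
  classical
  unfold NonMatchingEdge
  infer_instance

/-- the non-matching edges at a vertex -/
noncomputable def nmAt (u : V) : Finset (NonMatchingEdge G M) :=
  Finset.univ.filter (fun e => u ∈ e.1)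

/-- the color missing at a vertex -/
noncomputable def missAt (f : NonMatchingEdge G M → Fin 3) (u : V) : Fin 3 :=
  -(∑ e ∈ nmAt G M u, f e)

lemma sym2_exists_mem (e : Sym2 V) : ∃ x, x ∈ e := by
  induction e using Sym2.ind with
  | _ a b => exact ⟨a, Sym2.mem_mk_left a b⟩

/-- pick a vertex of an edge -/
noncomputable def pickV (e : Sym2 V) : V :=
  Classical.choose (sym2_exists_mem e)

lemma pickV_mem (e : Sym2 V) : pickV e ∈ e := Classical.choose_spec (sym2_exists_mem e)

/-- the extension of a PM coloring to all edges -/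
noncomputable def extendC (f : NonMatchingEdge G M → Fin 3) (e : G.edgeSet) : Fin 3 :=
  if h : e.1 ∈ M then missAt G M f (pickV e.1) else f ⟨e.1, e.2, h⟩

/-- the restriction of an edge coloring to non-matching edges -/
def restrictC (g : G.edgeSet → Fin 3) (e : NonMatchingEdge G M) : Fin 3 :=
  g ⟨e.1, e.2.1⟩

variable {G M}

lemma mem_nmAt {u : V} {e : NonMatchingEdge G M} : e ∈ nmAt G M u ↔ u ∈ e.1 := by
  simp [nmAt]

lemma matching_unique (hM : IsPerfectMatchingSet G M) {e e' : Sym2 V} {u : V}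
    (he : e ∈ M) (hu : u ∈ e) (he' : e' ∈ M) (hu' : u ∈ e') : e = e' := by
  obtain ⟨m, _, hun⟩ := hM.2 u
  rw [hun e ⟨he, hu⟩, hun e' ⟨he', hu'⟩]

lemma exists_partner (hM : IsPerfectMatchingSet G M) (u : V) : ∃ w, s(u, w) ∈ M := by
  obtain ⟨m, ⟨hmM, hum⟩, _⟩ := hM.2 u
  induction m using Sym2.ind with
  | _ a b =>
    rcases Sym2.mem_iff.mp hum with rfl | rfl
    · exact ⟨b, hmM⟩
    · exact ⟨a, by rwa [Sym2.eq_swap]⟩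

lemma nmAt_card [DecidableRel G.Adj] (hcubic : ∀ v : V, G.degree v = 3)
    (hM : IsPerfectMatchingSet G M) (u : V) : (nmAt G M u).card = 2 := by
  classical
  obtain ⟨m, ⟨hmM, hum⟩, huniq⟩ := hM.2 u
  have hmInc : m ∈ G.incidenceFinset u := by
    rw [SimpleGraph.mem_incidenceFinset]
    exact ⟨hM.1 hmM, hum⟩
  have hdeg : (G.incidenceFinset u).card = 3 := by
    rw [SimpleGraph.card_incidenceFinset_eq_degree]
    convert hcubic u
  have hcard : ((G.incidenceFinset u).erase m).card = 2 := by
    rw [Finset.card_erase_of_mem hmInc, hdeg]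
  rw [← hcard]
  apply Finset.card_bij (fun e _ => e.1)
  · intro e he
    rw [Finset.mem_erase, SimpleGraph.mem_incidenceFinset]
    exact ⟨fun h => e.2.2 (h ▸ hmM), e.2.1, mem_nmAt.mp he⟩
  · intro e₁ _ e₂ _ h
    exact Subtype.ext h
  · intro e' he'
    rw [Finset.mem_erase, SimpleGraph.mem_incidenceFinset] at he'
    obtain ⟨hne, heE, hue⟩ := he'
    have henM : e' ∉ M := fun h => hne (huniq e' ⟨h, hue⟩)
    exact ⟨⟨e', heE, henM⟩, mem_nmAt.mpr hue, rfl⟩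

lemma nmAt_pair [DecidableRel G.Adj] (hcubic : ∀ v : V, G.degree v = 3)
    (hM : IsPerfectMatchingSet G M) (u : V) :
    ∃ e₁ e₂ : NonMatchingEdge G M, e₁ ≠ e₂ ∧ nmAt G M u = {e₁, e₂} :=
  Finset.card_eq_two.mp (nmAt_card hcubic hM u)

variable {f : NonMatchingEdge G M → Fin 3}

lemma pm_inj_at (hM : IsPerfectMatchingSet G M) (hf : IsPMColoring G M f) (u : V) :
    ∀ e₁ e₂ : NonMatchingEdge G M, u ∈ e₁.1 → u ∈ e₂.1 → e₁ ≠ e₂ → f e₁ ≠ f e₂ := by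
  obtain ⟨w, hw⟩ := exists_partner hM u
  exact (hf u w hw).1

lemma miss_not_mem [DecidableRel G.Adj] (hcubic : ∀ v : V, G.degree v = 3)
    (hM : IsPerfectMatchingSet G M) (hf : IsPMColoring G M f) {u : V}
    {e : NonMatchingEdge G M} (he : u ∈ e.1) : f e ≠ missAt G M f u := by
  obtain ⟨e₁, e₂, hne, hpair⟩ := nmAt_pair hcubic hM u
  have h1 : u ∈ e₁.1 := mem_nmAt.mp (hpair ▸ Finset.mem_insert_self e₁ {e₂})
  have h2 : u ∈ e₂.1 := mem_nmAt.mp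
    (hpair ▸ Finset.mem_insert_of_mem (Finset.mem_singleton_self e₂))
  have h12 : f e₁ ≠ f e₂ := pm_inj_at hM hf u e₁ e₂ h1 h2 hne
  have hmiss : missAt G M f u = -(f e₁ + f e₂) := by
    unfold missAt; rw [hpair, Finset.sum_pair hne]
  have hmem : e ∈ ({e₁, e₂} : Finset (NonMatchingEdge G M)) := hpair ▸ mem_nmAt.mpr he
  rw [hmiss]
  rcases Finset.mem_insert.mp hmem with rfl | hmem
  · exact (fin3_L1 _ _ h12).1.symm
  · rw [Finset.mem_singleton.mp hmem]
    exact (fin3_L1 _ _ h12).2.symm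

lemma miss_eq (hM : IsPerfectMatchingSet G M) (hf : IsPMColoring G M f) {u v : V}
    (huv : s(u, v) ∈ M) : missAt G M f u = missAt G M f v := by
  have hvu : s(v, u) ∈ M := by rwa [Sym2.eq_swap]
  have himg : (nmAt G M u).image f = (nmAt G M v).image f := by
    ext c
    simp only [Finset.mem_image, mem_nmAt]
    constructor
    · intro h
      exact Set.ext_iff.mp (hf u v huv).2 c |>.mp (by simpa using h) |>.imp (by simp)
    · intro h
      exact Set.ext_iff.mp (hf u v huv).2 c |>.mpr (by simpa using h) |>.imp (by simp)
  have hsu : ∑ c ∈ (nmAt G M u).image f, c = ∑ e ∈ nmAt G M u, f e :=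
    Finset.sum_image (fun x hx y hy h =>
      by_contra fun hne => (hf u v huv).1 x y (mem_nmAt.mp hx) (mem_nmAt.mp hy) hne h)
  have hsv : ∑ c ∈ (nmAt G M v).image f, c = ∑ e ∈ nmAt G M v, f e :=
    Finset.sum_image (fun x hx y hy h =>
      by_contra fun hne => (hf v u hvu).1 x y (mem_nmAt.mp hx) (mem_nmAt.mp hy) hne h)
  unfold missAt
  rw [← hsu, ← hsv, himg]

lemma miss_eq_of_mem (hM : IsPerfectMatchingSet G M) (hf : IsPMColoring G M f)
    {e : Sym2 V} (heM : e ∈ M) {u v : V} (hu : u ∈ e) (hv : v ∈ e) :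
    missAt G M f u = missAt G M f v := by
  induction e using Sym2.ind with
  | _ a b =>
    rcases Sym2.mem_iff.mp hu with rfl | rfl <;> rcases Sym2.mem_iff.mp hv with rfl | rfl
    · rfl
    · exact miss_eq hM hf heM
    · exact (miss_eq hM hf heM).symm
    · rfl

lemma extend_eq_miss (hM : IsPerfectMatchingSet G M) (hf : IsPMColoring G M f)
    {e : G.edgeSet} (h : e.1 ∈ M) {u : V} (hu : u ∈ e.1) :
    extendC G M f e = missAt G M f u := by
  unfold extendC
  rw [dif_pos h]
  exact miss_eq_of_mem hM hf h (pickV_mem e.1) hu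

lemma extend_eq_f {e : G.edgeSet} (h : e.1 ∉ M) :
    extendC G M f e = f ⟨e.1, e.2, h⟩ := dif_neg h

lemma extend_proper [DecidableRel G.Adj] (hcubic : ∀ v : V, G.degree v = 3)
    (hM : IsPerfectMatchingSet G M) (hf : IsPMColoring G M f) :
    ∀ e₁ e₂ : G.edgeSet, e₁ ≠ e₂ → (∃ v : V, v ∈ e₁.1 ∧ v ∈ e₂.1) →
      extendC G M f e₁ ≠ extendC G M f e₂ := by
  rintro e₁ e₂ hne ⟨v, hv1, hv2⟩
  by_cases h1 : e₁.1 ∈ M <;> by_cases h2 : e₂.1 ∈ M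
  · exact absurd (Subtype.ext (matching_unique hM h1 hv1 h2 hv2)) hne
  · rw [extend_eq_miss hM hf h1 hv1, extend_eq_f h2]
    exact (miss_not_mem hcubic hM hf (e := ⟨e₂.1, e₂.2, h2⟩) hv2).symm
  · rw [extend_eq_miss hM hf h2 hv2, extend_eq_f h1]
    exact miss_not_mem hcubic hM hf (e := ⟨e₁.1, e₁.2, h1⟩) hv1
  · rw [extend_eq_f h1, extend_eq_f h2]
    exact pm_inj_at hM hf v ⟨e₁.1, e₁.2, h1⟩ ⟨e₂.1, e₂.2, h2⟩ hv1 hv2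
      (by intro h; apply hne; apply Subtype.ext; injection h)

lemma restrict_pm [DecidableRel G.Adj] (hcubic : ∀ v : V, G.degree v = 3)
    (hM : IsPerfectMatchingSet G M) {g : G.edgeSet → Fin 3}
    (hg : ∀ e₁ e₂ : G.edgeSet, e₁ ≠ e₂ → (∃ v : V, v ∈ e₁.1 ∧ v ∈ e₂.1) →
      g e₁ ≠ g e₂) : IsPMColoring G M (restrictC G M g) := by
  intro u v huv
  have hmE : s(u, v) ∈ G.edgeSet := hM.1 huv
  constructor
  · intro e₁ e₂ hu1 hu2 hne
    exact hg ⟨e₁.1, e₁.2.1⟩ ⟨e₂.1, e₂.2.1⟩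
      (by intro h; apply hne; apply Subtype.ext; injection h) ⟨u, hu1, hu2⟩
  · have key : ∀ w : V, w ∈ s(u, v) →
        {c : Fin 3 | ∃ e : NonMatchingEdge G M, w ∈ e.1 ∧ restrictC G M g e = c} =
          {c : Fin 3 | c ≠ g ⟨s(u, v), hmE⟩} := by
      intro w hw
      ext c
      simp only [Set.mem_setOf_eq]
      constructor
      · rintro ⟨e, hwe, rfl⟩
        exact hg ⟨e.1, e.2.1⟩ ⟨s(u, v), hmE⟩
          (fun h => e.2.2 ((congrArg Subtype.val h) ▸ huv)) ⟨w, hwe, hw⟩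
      · intro hc
        obtain ⟨e₁, e₂, hne, hpair⟩ := nmAt_pair hcubic hM w
        have h1 : w ∈ e₁.1 := mem_nmAt.mp (hpair ▸ Finset.mem_insert_self e₁ {e₂})
        have h2 : w ∈ e₂.1 := mem_nmAt.mp
          (hpair ▸ Finset.mem_insert_of_mem (Finset.mem_singleton_self e₂))
        have hab : restrictC G M g e₁ ≠ restrictC G M g e₂ :=
          hg ⟨e₁.1, e₁.2.1⟩ ⟨e₂.1, e₂.2.1⟩
            (by intro h; apply hne; apply Subtype.ext; injection h) ⟨w, h1, h2⟩
        have hma : g ⟨s(u, v), hmE⟩ ≠ restrictC G M g e₁ :=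
          hg ⟨s(u, v), hmE⟩ ⟨e₁.1, e₁.2.1⟩
            (fun h => e₁.2.2 ((congrArg Subtype.val h) ▸ huv)) ⟨w, hw, h1⟩
        have hmb : g ⟨s(u, v), hmE⟩ ≠ restrictC G M g e₂ :=
          hg ⟨s(u, v), hmE⟩ ⟨e₂.1, e₂.2.1⟩
            (fun h => e₂.2.2 ((congrArg Subtype.val h) ▸ huv)) ⟨w, hw, h2⟩
        rcases fin3_L3 _ _ _ c hab hma hmb hc with h | h
        · exact ⟨e₁, h1, h.symm⟩
        · exact ⟨e₂, h2, h.symm⟩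
    rw [key u (Sym2.mem_mk_left u v), key v (Sym2.mem_mk_right u v)]

end Aux

/-- For every cubic graph `G` with perfect matching `M`, the number of perfect matching
`3`-colorings of `(G, M)` equals the number of proper `3`-edge colorings of `G`. -/
theorem card_pmColorings_eq_card_edgeColorings {V : Type*} [Fintype V]
    (G : SimpleGraph V) [DecidableRel G.Adj] (hcubic : ∀ v : V, G.degree v = 3)
    (M : Set (Sym2 V)) (hM : IsPerfectMatchingSet G M) :
    Nat.card {f : NonMatchingEdge G M → Fin 3 // IsPMColoring G M f} =
      Nat.card {g : G.edgeSet → Fin 3 //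
        ∀ e₁ e₂ : G.edgeSet, e₁ ≠ e₂ → (∃ v : V, v ∈ e₁.1 ∧ v ∈ e₂.1) →
          g e₁ ≠ g e₂} := by
  apply Nat.card_congr
  refine
    { toFun := fun f => ⟨extendC G M f.1, extend_proper hcubic hM f.2⟩
      invFun := fun g => ⟨restrictC G M g.1, restrict_pm hcubic hM g.2⟩
      left_inv := ?_
      right_inv := ?_ }
  · rintro ⟨f, hf⟩
    apply Subtype.ext
    funext e
    show extendC G M f ⟨e.1, e.2.1⟩ = f e
    rw [extend_eq_f e.2.2]
    exact congrArg f (Subtype.ext rfl)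
  · rintro ⟨g, hg⟩
    apply Subtype.ext
    funext e
    show extendC G M (restrictC G M g) e = g e
    by_cases h : e.1 ∈ M
    · rw [extend_eq_miss hM (restrict_pm hcubic hM hg) h (pickV_mem e.1)]
      set u := pickV e.1 with hu
      have hue : u ∈ e.1 := pickV_mem e.1
      obtain ⟨e₁, e₂, hne, hpair⟩ := nmAt_pair hcubic hM u
      have h1 : u ∈ e₁.1 := mem_nmAt.mp (hpair ▸ Finset.mem_insert_self e₁ {e₂})
      have h2 : u ∈ e₂.1 := mem_nmAt.mp
        (hpair ▸ Finset.mem_insert_of_mem (Finset.mem_singleton_self e₂))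
      have hmiss : missAt G M (restrictC G M g) u =
          -(restrictC G M g e₁ + restrictC G M g e₂) := by
        unfold missAt; rw [hpair, Finset.sum_pair hne]
      have hab : restrictC G M g e₁ ≠ restrictC G M g e₂ :=
        hg ⟨e₁.1, e₁.2.1⟩ ⟨e₂.1, e₂.2.1⟩
          (by intro h; apply hne; apply Subtype.ext; injection h) ⟨u, h1, h2⟩
      have hea : g e ≠ restrictC G M g e₁ :=
        hg e ⟨e₁.1, e₁.2.1⟩ (fun hh => e₁.2.2 ((congrArg Subtype.val hh) ▸ h))
          ⟨u, hue, h1⟩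
      have heb : g e ≠ restrictC G M g e₂ :=
        hg e ⟨e₂.1, e₂.2.1⟩ (fun hh => e₂.2.2 ((congrArg Subtype.val hh) ▸ h))
          ⟨u, hue, h2⟩
      rw [hmiss]
      exact (fin3_L2 _ _ _ hab hea heb).symm
    · rw [extend_eq_f h]
      rfl
end
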